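/- arXiv:1410.5231 — 3 statements merged into one kernel-verified Lean document; each statement's English description precedes it below -/
import Mathlib

section
/- If π : ℕ* → [0,1] is a probability distribution on the positive integers (∑ π_m = 1) and 0 < p ≤ p' are real numbers, then the p'-impatience is bounded by (p'/p) times the p-impatience: ∑_{m≥1} |π_{m+1}^{p'} − π_m^{p'}| ≤ (p'/p) · ∑_{m≥1} |π_{m+1}^p − π_m^p|. -/
/-- For `0 ≤ y ≤ x ≤ 1` and `1 ≤ r`, `x^r - y^r ≤ r*(x-y)`. -/
lemma rpow_sub_rpow_le (x y r : ℝ) (hy : 0 ≤ y) (hyx : y ≤ x) (hx1 : x ≤ 1)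
    (hr : 1 ≤ r) : x ^ r - y ^ r ≤ r * (x - y) := by
  have hx : 0 ≤ x := hy.trans hyx
  rcases eq_or_lt_of_le hx with h0 | h0
  · have hx0 : x = 0 := h0.symm
    have hy0 : y = 0 := le_antisymm (hyx.trans_eq hx0) hy
    simp [hx0, hy0, Real.zero_rpow (by linarith : r ≠ 0)]
  · set t := y / x with ht
    have ht0 : 0 ≤ t := div_nonneg hy hx
    have ht1 : t ≤ 1 := div_le_one_of_le₀ hyx hx
    have hbern : 1 + r * (t - 1) ≤ (1 + (t - 1)) ^ r :=
      one_add_mul_self_le_rpow_one_add (by linarith) hr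
    have htr : 1 + r * (t - 1) ≤ t ^ r := by simpa using hbern
    have hyxt : y = t * x := by rw [ht, div_mul_cancel₀ y h0.ne']
    have hxr1 : x ^ r ≤ x := by
      calc x ^ r ≤ x ^ (1:ℝ) := Real.rpow_le_rpow_of_exponent_ge h0 hx1 hr
      _ = x := Real.rpow_one x
    have hylr : y ^ r = t ^ r * x ^ r := by
      rw [hyxt, Real.mul_rpow ht0 hx]
    nlinarith [Real.rpow_nonneg hx r, mul_nonneg (by linarith : (0:ℝ) ≤ r - 1) (by linarith : (0:ℝ) ≤ 1 - t)]

lemma abs_rpow_sub_rpow_le (x y r : ℝ) (hx0 : 0 ≤ x) (hy0 : 0 ≤ y) (hx1 : x ≤ 1)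
    (hy1 : y ≤ 1) (hr : 1 ≤ r) : |x ^ r - y ^ r| ≤ r * |x - y| := by
  rcases le_total y x with h | h
  · rw [abs_of_nonneg (by linarith : (0:ℝ) ≤ x - y),
      abs_of_nonneg (sub_nonneg.2 (Real.rpow_le_rpow hy0 h (by linarith)))]
    exact rpow_sub_rpow_le x y r hy0 h hx1 hr
  · rw [abs_of_nonpos (by linarith : x - y ≤ 0),
      abs_of_nonpos (sub_nonpos.2 (Real.rpow_le_rpow hx0 h (by linarith)))]
    have := rpow_sub_rpow_le y x r hx0 h hy1 hr
    linarith

/-- `π : ℕ → ℝ`, with `π m` standing for the weight of stage `m+1`, is a probability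
distribution on the positive integers.  For `0 < p ≤ p'`, the `p'`-impatience
`∑ |π_{m+1}^{p'} - π_m^{p'}|` (computed in `ℝ≥0∞` since it may be infinite) is at most
`(p'/p)` times the `p`-impatience. -/
theorem impatience_le_of_le (π : ℕ → ℝ) (hpos : ∀ m, 0 ≤ π m) (hsum : HasSum π 1)
    (p p' : ℝ) (hp : 0 < p) (hpp' : p ≤ p') :
    (∑' m : ℕ, ENNReal.ofReal |π (m + 1) ^ p' - π m ^ p'|) ≤
      ENNReal.ofReal (p' / p) * ∑' m : ℕ, ENNReal.ofReal |π (m + 1) ^ p - π m ^ p| := by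
  have hle1 : ∀ m, π m ≤ 1 := fun m => le_hasSum hsum m (fun j _ => hpos j)
  have hr : 1 ≤ p' / p := (one_le_div hp).2 hpp'
  have hre : ∀ m, π m ^ p' = (π m ^ p) ^ (p' / p) := by
    intro m
    rw [← Real.rpow_mul (hpos m), mul_div_cancel₀ _ hp.ne']
  have key : ∀ m, |π (m + 1) ^ p' - π m ^ p'| ≤ (p' / p) * |π (m + 1) ^ p - π m ^ p| := by
    intro m
    rw [hre, hre]
    exact abs_rpow_sub_rpow_le _ _ _ (Real.rpow_nonneg (hpos _) p)
      (Real.rpow_nonneg (hpos _) p) (Real.rpow_le_one (hpos _) (hle1 _) hp.le)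
      (Real.rpow_le_one (hpos _) (hle1 _) hp.le) hr
  calc (∑' m : ℕ, ENNReal.ofReal |π (m + 1) ^ p' - π m ^ p'|)
      ≤ ∑' m : ℕ, ENNReal.ofReal ((p' / p) * |π (m + 1) ^ p - π m ^ p|) :=
        ENNReal.tsum_le_tsum fun m => ENNReal.ofReal_le_ofReal (key m)
    _ = ∑' m : ℕ, ENNReal.ofReal (p' / p) * ENNReal.ofReal |π (m + 1) ^ p - π m ^ p| := by
        simp_rw [ENNReal.ofReal_mul (by linarith : (0:ℝ) ≤ p' / p)]
    _ = ENNReal.ofReal (p' / p) * ∑' m : ℕ, ENNReal.ofReal |π (m + 1) ^ p - π m ^ p| :=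
        ENNReal.tsum_mul_left
end

section
/- Let π be a probability distribution on ℕ*, s > 0, ε ∈ (0,1), and suppose N_0 ≥ 1 is such that ∑_{m≥r} π_m ≥ ε for all r ∈ {1,…,N_0+1}. Define λ_r := π_{r+1}/∑_{m≥r+1} π_m for 0 ≤ r ≤ N_0. Then ∑_{r=1}^{N_0} |λ_r^s − λ_{r−1}^s| ≤ ε^{−s} I_s(π) + s·ε^{−1−s}·(sup_{m≥1} π_m)^s, where I_s(π) := ∑_{m≥1}|π_{m+1}^s − π_m^s|. -/
lemma aux_mvt (a b s : ℝ) (ha : 0 < a) (hab : a ≤ b) (hs : 0 < s) :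
    a ^ (-s) - b ^ (-s) ≤ s * a ^ (-1 - s) * (b - a) := by
  have hb : 0 < b := lt_of_lt_of_le ha hab
  set t := b / a with ht_def
  have ht1 : 1 ≤ t := (one_le_div ha).mpr hab
  have ht0 : 0 < t := lt_of_lt_of_le one_pos ht1
  have h1 : 1 - s * Real.log t ≤ t ^ (-s) := by
    have h := Real.add_one_le_exp (Real.log t * (-s))
    rw [Real.rpow_def_of_pos ht0]
    nlinarith
  have h2 : Real.log t ≤ t - 1 := Real.log_le_sub_one_of_pos ht0
  have h3 : 1 - t ^ (-s) ≤ s * (t - 1) := by nlinarith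
  have hbt : b ^ (-s) = a ^ (-s) * t ^ (-s) := by
    rw [ht_def, ← Real.mul_rpow ha.le (by positivity : (0:ℝ) ≤ b / a)]
    rw [mul_div_cancel₀ _ (ne_of_gt ha)]
  have has : (0:ℝ) < a ^ (-s) := Real.rpow_pos_of_pos ha _
  have key : a ^ (-s) - b ^ (-s) ≤ a ^ (-s) * (s * (t - 1)) := by
    rw [hbt]; nlinarith
  have h4 : a ^ (-s) * (s * (t - 1)) = s * a ^ (-1 - s) * (b - a) := by
    have : a ^ (-1 - s) = a ^ (-s) * a⁻¹ := by
      rw [← Real.rpow_neg_one a, ← Real.rpow_add ha]; ring_nf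
    rw [this, ht_def]
    field_simp
  linarith [key, h4.le]

/-- Bound on the variation of the normalized discount factors (proof of Theorem 2.7).
With `π m` the weight of stage `m+1`, tail sums `T r := ∑' n, π (n + r)` and
`λ_r := π_{r+1}/T_r`, if `T r ≥ ε` for all `r ≤ N₀`, then
`∑_{r=1}^{N₀} |λ_r^s - λ_{r-1}^s| ≤ ε^{-s} I_s(π) + s ε^{-1-s} (sup_m π_m)^s`,
the impatience `I_s(π) = ∑_{m≥1} |π_{m+1}^s - π_m^s|` being computed in `ℝ≥0∞`. -/
theorem variation_of_normalized_weights_le (π : ℕ → ℝ) (hpos : ∀ m, 0 ≤ π m)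
    (hsum : HasSum π 1) (s : ℝ) (hs : 0 < s) (ε : ℝ) (hε0 : 0 < ε) (hε1 : ε < 1)
    (N₀ : ℕ) (hN₀ : 1 ≤ N₀) (htail : ∀ r ≤ N₀, ε ≤ ∑' n : ℕ, π (n + r)) :
    ENNReal.ofReal (∑ r ∈ Finset.Icc 1 N₀,
        |(π r / ∑' n : ℕ, π (n + r)) ^ s - (π (r - 1) / ∑' n : ℕ, π (n + (r - 1))) ^ s|) ≤
      ENNReal.ofReal (ε ^ (-s)) * (∑' m : ℕ, ENNReal.ofReal |π (m + 1) ^ s - π m ^ s|) +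
        ENNReal.ofReal (s * ε ^ (-1 - s) * (⨆ m : ℕ, π m) ^ s) := by
  have hπsum : Summable π := hsum.summable
  set T : ℕ → ℝ := fun r => ∑' n : ℕ, π (n + r) with hT_def
  have hTsumm : ∀ r, Summable fun n => π (n + r) := fun r =>
    (summable_nat_add_iff r).mpr hπsum
  have hTrec : ∀ r, T r = π r + T (r + 1) := by
    intro r
    have h0 := (hTsumm r).tsum_eq_zero_add
    simp only [zero_add] at h0
    rw [hT_def]
    simp only at h0 ⊢
    rw [h0]
    congr 1
    apply tsum_congr
    intro n
    congr 1
    omega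
  have hTnonneg : ∀ r, 0 ≤ T r := fun r => tsum_nonneg fun n => hpos _
  -- sup facts
  set S : ℝ := ⨆ m : ℕ, π m with hS_def
  have hπle1 : ∀ m, π m ≤ 1 := fun m => le_hasSum hsum m fun n _ => hpos n
  have hbdd : BddAbove (Set.range π) := ⟨1, fun x ⟨m, hm⟩ => hm ▸ hπle1 m⟩
  have hπleS : ∀ m, π m ≤ S := fun m => le_ciSup hbdd m
  have hS0 : 0 ≤ S := le_trans (hpos 0) (hπleS 0)
  -- per-term bound
  have hterm : ∀ r ∈ Finset.Icc 1 N₀,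
      |(π r / T r) ^ s - (π (r - 1) / T (r - 1)) ^ s| ≤
        ε ^ (-s) * |π r ^ s - π (r - 1) ^ s| +
          s * ε ^ (-1 - s) * S ^ s * π (r - 1) := by
    intro r hr
    rw [Finset.mem_Icc] at hr
    obtain ⟨hr1, hrN⟩ := hr
    have hTr : ε ≤ T r := htail r hrN
    have hTr' : ε ≤ T (r - 1) := htail (r - 1) (le_trans (Nat.sub_le r 1) hrN)
    have hTrpos : 0 < T r := lt_of_lt_of_le hε0 hTr
    have hTr'pos : 0 < T (r - 1) := lt_of_lt_of_le hε0 hTr'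
    have hrec : T (r - 1) = π (r - 1) + T r := by
      have := hTrec (r - 1)
      rwa [Nat.sub_add_cancel hr1] at this
    have hle : T r ≤ T (r - 1) := by rw [hrec]; linarith [hpos (r - 1)]
    -- rewrite quotients
    have e1 : (π r / T r) ^ s = π r ^ s * T r ^ (-s) := by
      rw [Real.div_rpow (hpos r) (hTnonneg r), Real.rpow_neg (hTnonneg r), div_eq_mul_inv]
    have e2 : (π (r - 1) / T (r - 1)) ^ s = π (r - 1) ^ s * T (r - 1) ^ (-s) := by
      rw [Real.div_rpow (hpos _) (hTnonneg _), Real.rpow_neg (hTnonneg _), div_eq_mul_inv]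
    set A := π r ^ s
    set B := π (r - 1) ^ s
    set u := T r ^ (-s)
    set v := T (r - 1) ^ (-s)
    have hu0 : 0 ≤ u := Real.rpow_nonneg (hTnonneg r) _
    have hB0 : 0 ≤ B := Real.rpow_nonneg (hpos _) _
    have huv : v ≤ u := Real.rpow_le_rpow_of_nonpos hTrpos hle (neg_nonpos.mpr hs.le)
    have hsplit : |A * u - B * v| ≤ |A - B| * u + B * (u - v) := by
      have : A * u - B * v = (A - B) * u + B * (u - v) := by ring
      rw [this]
      calc |(A - B) * u + B * (u - v)| ≤ |(A - B) * u| + |B * (u - v)| := abs_add_le _ _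
        _ = |A - B| * u + B * (u - v) := by
            rw [abs_mul, abs_of_nonneg hu0, abs_mul, abs_of_nonneg hB0,
              abs_of_nonneg (by linarith : (0:ℝ) ≤ u - v)]
    have huε : u ≤ ε ^ (-s) :=
      Real.rpow_le_rpow_of_nonpos hε0 hTr (neg_nonpos.mpr hs.le)
    have hmvt : u - v ≤ s * T r ^ (-1 - s) * π (r - 1) := by
      have := aux_mvt (T r) (T (r - 1)) s hTrpos hle hs
      have heq : T (r - 1) - T r = π (r - 1) := by rw [hrec]; ring
      rw [heq] at this
      exact this
    have hTε : T r ^ (-1 - s) ≤ ε ^ (-1 - s) :=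
      Real.rpow_le_rpow_of_nonpos hε0 hTr (by linarith)
    have hBS : B ≤ S ^ s := Real.rpow_le_rpow (hpos _) (hπleS _) hs.le
    have hSs0 : 0 ≤ S ^ s := Real.rpow_nonneg hS0 _
    have hεs0 : 0 ≤ ε ^ (-1 - s) := Real.rpow_nonneg hε0.le _
    have hπr0 : 0 ≤ π (r - 1) := hpos _
    have h2 : B * (u - v) ≤ s * ε ^ (-1 - s) * S ^ s * π (r - 1) := by
      have hTs0 : 0 ≤ T r ^ (-1 - s) := Real.rpow_nonneg (hTnonneg r) _
      nlinarith [mul_le_mul_of_nonneg_left hmvt hB0,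
        mul_le_mul_of_nonneg_right hBS (mul_nonneg (mul_nonneg hs.le hεs0) hπr0),
        mul_le_mul_of_nonneg_right hTε (mul_nonneg hs.le hπr0)]
    have h1 : |A - B| * u ≤ ε ^ (-s) * |A - B| :=
      by rw [mul_comm]; exact mul_le_mul_of_nonneg_right huε (abs_nonneg _)
    rw [e1, e2]
    calc |A * u - B * v| ≤ |A - B| * u + B * (u - v) := hsplit
      _ ≤ ε ^ (-s) * |A - B| + s * ε ^ (-1 - s) * S ^ s * π (r - 1) := add_le_add h1 h2
  -- sum the bound
  have hsum1 : ∑ r ∈ Finset.Icc 1 N₀, |(π r / T r) ^ s - (π (r - 1) / T (r - 1)) ^ s| ≤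
      ε ^ (-s) * ∑ r ∈ Finset.Icc 1 N₀, |π r ^ s - π (r - 1) ^ s| +
        s * ε ^ (-1 - s) * S ^ s * ∑ r ∈ Finset.Icc 1 N₀, π (r - 1) := by
    calc _ ≤ ∑ r ∈ Finset.Icc 1 N₀, (ε ^ (-s) * |π r ^ s - π (r - 1) ^ s| +
          s * ε ^ (-1 - s) * S ^ s * π (r - 1)) := Finset.sum_le_sum hterm
      _ = _ := by rw [Finset.sum_add_distrib, ← Finset.mul_sum, ← Finset.mul_sum]
  -- bound the second finite sum by 1
  have hsum2 : ∑ r ∈ Finset.Icc 1 N₀, π (r - 1) ≤ 1 := by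
    have : ∑ r ∈ Finset.Icc 1 N₀, π (r - 1) = ∑ i ∈ Finset.range N₀, π i := by
      rw [← Finset.Ico_add_one_right_eq_Icc, Finset.sum_Ico_eq_sum_range]
      simp
    rw [this]
    exact sum_le_hasSum (Finset.range N₀) (fun i _ => hpos i) hsum
  -- pass to ENNReal
  have hεs : (0:ℝ) ≤ ε ^ (-s) := Real.rpow_nonneg hε0.le _
  have hK : (0:ℝ) ≤ s * ε ^ (-1 - s) * S ^ s := by positivity
  calc ENNReal.ofReal (∑ r ∈ Finset.Icc 1 N₀,
        |(π r / T r) ^ s - (π (r - 1) / T (r - 1)) ^ s|)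
      ≤ ENNReal.ofReal (ε ^ (-s) * ∑ r ∈ Finset.Icc 1 N₀, |π r ^ s - π (r - 1) ^ s| +
          s * ε ^ (-1 - s) * S ^ s * ∑ r ∈ Finset.Icc 1 N₀, π (r - 1)) :=
        ENNReal.ofReal_le_ofReal hsum1
    _ ≤ ENNReal.ofReal (ε ^ (-s) * ∑ r ∈ Finset.Icc 1 N₀, |π r ^ s - π (r - 1) ^ s|) +
          ENNReal.ofReal (s * ε ^ (-1 - s) * S ^ s * ∑ r ∈ Finset.Icc 1 N₀, π (r - 1)) :=
        ENNReal.ofReal_add_le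
    _ ≤ ENNReal.ofReal (ε ^ (-s)) * (∑' m : ℕ, ENNReal.ofReal |π (m + 1) ^ s - π m ^ s|) +
          ENNReal.ofReal (s * ε ^ (-1 - s) * S ^ s) := by
        refine add_le_add ?_ ?_
        · rw [ENNReal.ofReal_mul hεs]
          gcongr
          have : ∑ r ∈ Finset.Icc 1 N₀, |π r ^ s - π (r - 1) ^ s| =
              ∑ i ∈ Finset.range N₀, |π (i + 1) ^ s - π i ^ s| := by
            rw [← Finset.Ico_add_one_right_eq_Icc, Finset.sum_Ico_eq_sum_range]
            simp [add_comm]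
          rw [this, ENNReal.ofReal_sum_of_nonneg fun i _ => abs_nonneg _]
          exact ENNReal.sum_le_tsum _
        · refine ENNReal.ofReal_le_ofReal ?_
          calc s * ε ^ (-1 - s) * S ^ s * ∑ r ∈ Finset.Icc 1 N₀, π (r - 1)
              ≤ s * ε ^ (-1 - s) * S ^ s * 1 := mul_le_mul_of_nonneg_left hsum2 hK
            _ = s * ε ^ (-1 - s) * S ^ s := mul_one _
end

section
/- Suppose v : [0,1] → ℝ is a function, s > 0, C > 0, β > 0 satisfy |v(λ) − v(λ')| ≤ C|λ^s − λ'^s| for all λ, λ' ∈ [0,β). Let π be a probability distribution on ℕ* and ε ∈ (0,1) with sup_m π_m < εβ, and let N_0 := max{N ≥ 1 : ∑_{m≥N+1} π_m ≥ ε}. Then λ_r := π_{r+1}/∑_{m≥r+1}π_m satisfies λ_r < β for all 0 ≤ r ≤ N_0, and ∑_{r=1}^{N_0} |v(λ_r) − v(λ_{r−1})| ≤ C(ε^{−s} + s·ε^{−1−s})·I_s(π). -/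
open Finset Filter

lemma aux_mvt_s10 (s : ℝ) (hs : 0 < s) {ε A B : ℝ} (hε : 0 < ε) (hA : ε ≤ A) (hAB : A ≤ B) :
    A ^ (-s) - B ^ (-s) ≤ s * ε ^ (-1 - s) * (B - A) := by
  rcases eq_or_lt_of_le hAB with rfl | hAB
  · simp
  have hA0 : (0:ℝ) < A := lt_of_lt_of_le hε hA
  obtain ⟨c, hc, hceq⟩ := exists_hasDerivAt_eq_slope (fun x => x ^ (-s))
      (fun x => (-s) * x ^ (-s - 1)) hAB
      (fun x hx => (Real.continuousAt_rpow_const x (-s)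
        (Or.inl (lt_of_lt_of_le hA0 hx.1).ne')).continuousWithinAt)
      (fun x hx => Real.hasDerivAt_rpow_const (Or.inl (hA0.trans hx.1).ne'))
  rw [eq_div_iff (sub_ne_zero.mpr hAB.ne')] at hceq
  have hkey : A ^ (-s) - B ^ (-s) = s * c ^ (-s - 1) * (B - A) := by linear_combination hceq
  rw [hkey]
  have hcε : ε ≤ c := hA.trans hc.1.le
  have : c ^ (-s - 1) ≤ ε ^ (-s - 1) :=
    Real.rpow_le_rpow_of_nonpos hε hcε (by linarith)
  calc s * c ^ (-s - 1) * (B - A) ≤ s * ε ^ (-s - 1) * (B - A) := by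
        have hBA : 0 ≤ B - A := by linarith
        exact mul_le_mul_of_nonneg_right (mul_le_mul_of_nonneg_left this hs.le) hBA
    _ = s * ε ^ (-1 - s) * (B - A) := by rw [show (-s - 1 : ℝ) = -1 - s by ring]

lemma aux_term (s : ℝ) (hs : 0 < s) {ε a b A B : ℝ} (hε : 0 < ε) (ha : 0 ≤ a) (haA : a ≤ A)
    (hb : 0 ≤ b) (hbB : b ≤ B) (hA : ε ≤ A) (hAB : A ≤ B) :
    |(a / A) ^ s - (b / B) ^ s| ≤
      ε ^ (-s) * |a ^ s - b ^ s| + s * ε ^ (-1 - s) * (b ^ s * (B - A)) := by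
  have hA0 : (0:ℝ) < A := lt_of_lt_of_le hε hA
  have hB0 : (0:ℝ) < B := lt_of_lt_of_le hA0 hAB
  have hAs : (0:ℝ) < A ^ s := Real.rpow_pos_of_pos hA0 s
  have hBs : (0:ℝ) < B ^ s := Real.rpow_pos_of_pos hB0 s
  rw [Real.div_rpow ha hA0.le, Real.div_rpow hb hB0.le]
  have hsplit : a ^ s / A ^ s - b ^ s / B ^ s
      = (a ^ s - b ^ s) / A ^ s + b ^ s * (1 / A ^ s - 1 / B ^ s) := by
    field_simp
    ring
  rw [hsplit]
  have hABs : A ^ s ≤ B ^ s := Real.rpow_le_rpow hA0.le hAB hs.le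
  have h2nonneg : 0 ≤ b ^ s * (1 / A ^ s - 1 / B ^ s) := by
    have : 1 / B ^ s ≤ 1 / A ^ s := one_div_le_one_div_of_le hAs hABs
    have hbs : 0 ≤ b ^ s := Real.rpow_nonneg hb s
    nlinarith
  calc |(a ^ s - b ^ s) / A ^ s + b ^ s * (1 / A ^ s - 1 / B ^ s)|
      ≤ |(a ^ s - b ^ s) / A ^ s| + |b ^ s * (1 / A ^ s - 1 / B ^ s)| := abs_add_le _ _
    _ = |a ^ s - b ^ s| / A ^ s + b ^ s * (1 / A ^ s - 1 / B ^ s) := by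
        rw [abs_div, abs_of_pos hAs, abs_of_nonneg h2nonneg]
    _ ≤ ε ^ (-s) * |a ^ s - b ^ s| + s * ε ^ (-1 - s) * (b ^ s * (B - A)) := by
        refine add_le_add ?_ ?_
        · have h2 : (A ^ s)⁻¹ ≤ ε ^ (-s) := by
            rw [Real.rpow_neg hε.le]
            exact inv_anti₀ (Real.rpow_pos_of_pos hε _)
              (Real.rpow_le_rpow hε.le hA hs.le)
          calc |a ^ s - b ^ s| / A ^ s = (A ^ s)⁻¹ * |a ^ s - b ^ s| := by
                rw [div_eq_mul_inv, mul_comm]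
            _ ≤ ε ^ (-s) * |a ^ s - b ^ s| :=
                mul_le_mul_of_nonneg_right h2 (abs_nonneg _)
        · have h1 : 1 / A ^ s - 1 / B ^ s = A ^ (-s) - B ^ (-s) := by
            rw [Real.rpow_neg hA0.le, Real.rpow_neg hB0.le, one_div, one_div]
          rw [h1]
          have := aux_mvt_s10 s hs hε hA hAB
          have hbs : 0 ≤ b ^ s := Real.rpow_nonneg hb s
          nlinarith [mul_le_mul_of_nonneg_left this hbs]

/-- Hölder-type variation bound for the discounted values (proof of Theorem 2.7).
`v` satisfies `|v λ - v λ'| ≤ C |λ^s - λ'^s|` on `[0, β)`; `π m` is the weight of stage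
`m+1`, with tail sums `T r := ∑' n, π (n + r)`, normalized weights `λ_r := π_{r+1}/T_r`, and
`N₀ := max {N ≥ 1 : T N ≥ ε}`.  If `sup_m π_m < ε β`, then `λ_r < β` for all `r ≤ N₀` and
`∑_{r=1}^{N₀} |v(λ_r) - v(λ_{r-1})| ≤ C (ε^{-s} + s ε^{-1-s}) I_s(π)` (impatience in `ℝ≥0∞`). -/
theorem variation_of_values_le (v : ℝ → ℝ) (s C β : ℝ) (hs : 0 < s) (hC : 0 < C)
    (hβ : 0 < β)
    (hv : ∀ x y : ℝ, 0 ≤ x → x < β → 0 ≤ y → y < β → |v x - v y| ≤ C * |x ^ s - y ^ s|)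
    (π : ℕ → ℝ) (hpos : ∀ m, 0 ≤ π m) (hsum : HasSum π 1)
    (ε : ℝ) (hε0 : 0 < ε) (hε1 : ε < 1) (hsup : (⨆ m : ℕ, π m) < ε * β)
    (N₀ : ℕ) (hN₀ : 1 ≤ N₀) (hmem : ε ≤ ∑' n : ℕ, π (n + N₀))
    (hmax : ∀ N, N₀ < N → (∑' n : ℕ, π (n + N)) < ε) :
    (∀ r ≤ N₀, π r / (∑' n : ℕ, π (n + r)) < β) ∧
    ENNReal.ofReal (∑ r ∈ Finset.Icc 1 N₀,
        |v (π r / ∑' n : ℕ, π (n + r)) - v (π (r - 1) / ∑' n : ℕ, π (n + (r - 1)))|) ≤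
      ENNReal.ofReal (C * (ε ^ (-s) + s * ε ^ (-1 - s))) *
        ∑' m : ℕ, ENNReal.ofReal |π (m + 1) ^ s - π m ^ s| := by
  have hπsum : Summable π := hsum.summable
  set T : ℕ → ℝ := fun r => ∑' n : ℕ, π (n + r) with hTdef
  have hTsummable : ∀ r, Summable fun n => π (n + r) := fun r =>
    (summable_nat_add_iff r).mpr hπsum
  have hTrec : ∀ r, T r = π r + T (r + 1) := by
    intro r
    have h0 := Summable.tsum_eq_zero_add (hTsummable r)
    simp only [zero_add] at h0
    calc T r = π r + ∑' n : ℕ, π (n + 1 + r) := h0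
      _ = π r + T (r + 1) := by
          congr 1
          exact tsum_congr fun n => congrArg π (by omega)
  have hTnonneg : ∀ r, 0 ≤ T r := fun r => tsum_nonneg fun n => hpos _
  have hπleT : ∀ r, π r ≤ T r := fun r => by
    have := hTnonneg (r + 1); rw [hTrec r]; linarith
  have hTanti : Antitone T := antitone_nat_of_succ_le fun r => by
    have := hpos r; rw [hTrec r]; linarith
  have hTge : ∀ r ≤ N₀, ε ≤ T r := fun r hr => le_trans hmem (hTanti hr)
  have hπle1 : ∀ m, π m ≤ 1 := fun m => by
    have := Summable.le_tsum hπsum m fun i _ => hpos i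
    rwa [hsum.tsum_eq] at this
  have hπlt : ∀ m, π m < ε * β := fun m =>
    lt_of_le_of_lt (le_ciSup ⟨1, by rintro x ⟨m, rfl⟩; exact hπle1 m⟩ m) hsup
  have part1 : ∀ r ≤ N₀, π r / T r < β := by
    intro r hr
    have hTr : 0 < T r := lt_of_lt_of_le hε0 (hTge r hr)
    rw [div_lt_iff₀ hTr]
    calc π r < ε * β := hπlt r
      _ = β * ε := mul_comm _ _
      _ ≤ β * T r := mul_le_mul_of_nonneg_left (hTge r hr) hβ.le
  refine ⟨part1, ?_⟩
  set g : ℕ → ℝ := fun m => |π (m + 1) ^ s - π m ^ s| with hgdef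
  have hgnonneg : ∀ m, 0 ≤ g m := fun m => abs_nonneg _
  by_cases hS : (∑' m : ℕ, ENNReal.ofReal (g m)) = ⊤
  · rw [hS, ENNReal.mul_top]
    · exact le_top
    · rw [Ne, ENNReal.ofReal_eq_zero, not_le]
      positivity
  · have hgsum : Summable g := by
      have h1 := ENNReal.summable_toReal hS
      have h2 : ∀ m, (ENNReal.ofReal (g m)).toReal = g m := fun m =>
        ENNReal.toReal_ofReal (hgnonneg m)
      simpa [h2] using h1
    set I : ℝ := ∑' m, g m with hIdef
    have hInonneg : 0 ≤ I := tsum_nonneg hgnonneg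
    have hSI : (∑' m : ℕ, ENNReal.ofReal (g m)) = ENNReal.ofReal I :=
      (ENNReal.ofReal_tsum_of_nonneg hgnonneg hgsum).symm
    rw [hSI, ← ENNReal.ofReal_mul (by positivity)]
    apply ENNReal.ofReal_le_ofReal
    -- key claim: sup of π m ^ s bounded by I
    have claim5 : ∀ m, π m ^ s ≤ I := by
      intro m
      have hπ0 : Tendsto π atTop (nhds 0) := hπsum.tendsto_atTop_zero
      have hshift : Tendsto (fun k : ℕ => π (m + k)) atTop (nhds 0) :=
        hπ0.comp (tendsto_atTop_atTop_of_monotone (fun a b hab => by omega)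
          (fun b => ⟨b, by omega⟩))
      have hcont : ContinuousAt (fun x : ℝ => x ^ s) 0 :=
        Real.continuousAt_rpow_const 0 s (Or.inr hs.le)
      have htend : Tendsto (fun k : ℕ => π (m + k) ^ s + I) atTop (nhds (0 + I)) := by
        refine Tendsto.add_const I ?_
        have := hcont.tendsto.comp hshift
        simpa [Function.comp_def, Real.zero_rpow hs.ne'] using this
      have hbound : ∀ k : ℕ, π m ^ s ≤ π (m + k) ^ s + I := by
        intro k
        have hd := dist_le_range_sum_dist (fun i => π (m + i) ^ s) k
        simp only [Nat.add_zero] at hd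
        have hdg : ∀ i ∈ Finset.range k,
            dist (π (m + i) ^ s) (π (m + (i + 1)) ^ s) = g (m + i) := by
          intro i _
          simp only [hgdef]
          rw [Real.dist_eq, abs_sub_comm, show m + (i + 1) = m + i + 1 from by omega]
        rw [Finset.sum_congr rfl hdg] at hd
        have hsumle : ∑ i ∈ Finset.range k, g (m + i) ≤ I := by
          have heq : ∑ i ∈ Finset.Ico m (m + k), g i = ∑ i ∈ Finset.range k, g (m + i) := by
            rw [Finset.sum_Ico_eq_sum_range]
            simp
          rw [← heq]
          exact Summable.sum_le_tsum _ (fun i _ => hgnonneg i) hgsum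
        have habs : π m ^ s - π (m + k) ^ s ≤ dist (π m ^ s) (π (m + k) ^ s) := by
          rw [Real.dist_eq]; exact le_abs_self _
        linarith
      have := ge_of_tendsto' htend hbound
      linarith
    -- per-term bound
    have hterm : ∀ r ∈ Finset.Icc 1 N₀,
        |v (π r / T r) - v (π (r - 1) / T (r - 1))| ≤
          C * (ε ^ (-s) * g (r - 1) + s * ε ^ (-1 - s) * (π (r - 1) ^ s * π (r - 1))) := by
      intro r hr
      rw [Finset.mem_Icc] at hr
      have hr1 : r - 1 ≤ N₀ := le_trans (Nat.sub_le r 1) hr.2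
      have hgr : g (r - 1) = |π r ^ s - π (r - 1) ^ s| := by
        simp only [hgdef]
        rw [show r - 1 + 1 = r from by omega]
      have hBA : T (r - 1) - T r = π (r - 1) := by
        have : r - 1 + 1 = r := by omega
        have h := hTrec (r - 1)
        rw [this] at h
        linarith
      have h1 := hv (π r / T r) (π (r - 1) / T (r - 1))
        (div_nonneg (hpos r) (hTnonneg r)) (part1 r hr.2)
        (div_nonneg (hpos _) (hTnonneg _)) (part1 _ hr1)
      have h2 := aux_term s hs hε0 (hpos r) (hπleT r) (hpos (r - 1)) (hπleT (r - 1))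
        (hTge r hr.2) (hTanti (by omega : r - 1 ≤ r))
      rw [← hgr, hBA] at h2
      calc |v (π r / T r) - v (π (r - 1) / T (r - 1))|
          ≤ C * |(π r / T r) ^ s - (π (r - 1) / T (r - 1)) ^ s| := h1
        _ ≤ C * (ε ^ (-s) * g (r - 1) + s * ε ^ (-1 - s) * (π (r - 1) ^ s * π (r - 1))) :=
            mul_le_mul_of_nonneg_left h2 hC.le
    have hsum1 : ∑ r ∈ Finset.Icc 1 N₀, g (r - 1) ≤ I := by
      have heq : ∑ r ∈ Finset.Icc 1 N₀, g (r - 1) = ∑ i ∈ Finset.range N₀, g i := by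
        rw [← Finset.Ico_add_one_right_eq_Icc, Finset.sum_Ico_eq_sum_range]
        exact Finset.sum_congr (by norm_num) fun i _ => congrArg g (by omega)
      rw [heq]
      exact Summable.sum_le_tsum _ (fun i _ => hgnonneg i) hgsum
    have hsum2 : ∑ r ∈ Finset.Icc 1 N₀, π (r - 1) ^ s * π (r - 1) ≤ I := by
      calc ∑ r ∈ Finset.Icc 1 N₀, π (r - 1) ^ s * π (r - 1)
          ≤ ∑ r ∈ Finset.Icc 1 N₀, I * π (r - 1) := by
            refine Finset.sum_le_sum fun r _ => ?_
            exact mul_le_mul_of_nonneg_right (claim5 _) (hpos _)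
        _ = I * ∑ r ∈ Finset.Icc 1 N₀, π (r - 1) := by rw [Finset.mul_sum]
        _ ≤ I * 1 := by
            refine mul_le_mul_of_nonneg_left ?_ hInonneg
            have heq : ∑ r ∈ Finset.Icc 1 N₀, π (r - 1) = ∑ i ∈ Finset.range N₀, π i := by
              rw [← Finset.Ico_add_one_right_eq_Icc, Finset.sum_Ico_eq_sum_range]
              exact Finset.sum_congr (by norm_num) fun i _ => congrArg π (by omega)
            rw [heq, ← hsum.tsum_eq]
            exact Summable.sum_le_tsum _ (fun i _ => hpos i) hπsum
        _ = I := mul_one I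
    calc ∑ r ∈ Finset.Icc 1 N₀, |v (π r / T r) - v (π (r - 1) / T (r - 1))|
        ≤ ∑ r ∈ Finset.Icc 1 N₀,
            C * (ε ^ (-s) * g (r - 1) + s * ε ^ (-1 - s) * (π (r - 1) ^ s * π (r - 1))) :=
          Finset.sum_le_sum hterm
      _ = C * ε ^ (-s) * (∑ r ∈ Finset.Icc 1 N₀, g (r - 1)) +
          C * (s * ε ^ (-1 - s)) * (∑ r ∈ Finset.Icc 1 N₀, π (r - 1) ^ s * π (r - 1)) := by
          rw [Finset.mul_sum, Finset.mul_sum, ← Finset.sum_add_distrib]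
          exact Finset.sum_congr rfl fun r _ => by ring
      _ ≤ C * ε ^ (-s) * I + C * (s * ε ^ (-1 - s)) * I := by
          have h1 : (0:ℝ) ≤ C * ε ^ (-s) := by positivity
          have h2 : (0:ℝ) ≤ C * (s * ε ^ (-1 - s)) := by positivity
          exact add_le_add (mul_le_mul_of_nonneg_left hsum1 h1)
            (mul_le_mul_of_nonneg_left hsum2 h2)
      _ = C * (ε ^ (-s) + s * ε ^ (-1 - s)) * I := by ring
end
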